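/- Fix w₀ ∈ ℂ and Y > 0, and let ω ∈ ℓ²(ℤ₊) be the sequence ω_n = (conj(w₀)·Y)^n / n!. Then ω is a cyclic vector for the right shift operator R on ℓ²(ℤ₊): the linear span of {R^m ω : m ≥ 0} is dense in ℓ²(ℤ₊). -/

import Mathlib

open Finset
open scoped ENNReal

lemma key_aux (a : ℂ) (g : ℕ → ℂ) (C : ℝ) (hC : ∀ n, ‖g n‖ ≤ C)
    (h0 : ∀ m : ℕ, ∑' n : ℕ, a ^ n / (Nat.factorial n : ℂ) * g (n + m) = 0) (m : ℕ) :
    g m = 0 := by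
  set F : ℕ × ℕ → ℂ := fun p =>
    (-a) ^ p.1 / (Nat.factorial p.1 : ℂ) *
      (a ^ p.2 / (Nat.factorial p.2 : ℂ) * g (p.2 + (p.1 + m))) with hF_def
  have h1 : Summable (fun k : ℕ => ‖a‖ ^ k / (Nat.factorial k : ℝ)) :=
    Real.summable_pow_div_factorial ‖a‖
  have hC0 : 0 ≤ C := le_trans (norm_nonneg _) (hC 0)
  have hF : Summable F := by
    apply Summable.of_norm_bounded
      (h1.mul_of_nonneg (h1.mul_right C)
        (fun k => by positivity) (fun n => by positivity))
    intro p
    have hnorm : ‖F p‖ = ‖a‖ ^ p.1 / (Nat.factorial p.1 : ℝ) *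
        (‖a‖ ^ p.2 / (Nat.factorial p.2 : ℝ) * ‖g (p.2 + (p.1 + m))‖) := by
      simp [hF_def, norm_mul, norm_div, norm_pow]
    rw [hnorm]
    have h2 : ‖a‖ ^ p.2 / (Nat.factorial p.2 : ℝ) * ‖g (p.2 + (p.1 + m))‖ ≤
        ‖a‖ ^ p.2 / (Nat.factorial p.2 : ℝ) * C :=
      mul_le_mul_of_nonneg_left (hC _) (by positivity)
    exact mul_le_mul_of_nonneg_left h2 (by positivity)
  have step2 : ∑' p : ℕ × ℕ, F p = 0 := by
    rw [Summable.tsum_prod' hF hF.prod_factor]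
    have : ∀ k : ℕ, ∑' n : ℕ, F (k, n) = 0 := by
      intro k
      have heq : ∑' n : ℕ, F (k, n) =
          (-a) ^ k / (Nat.factorial k : ℂ) *
            ∑' n : ℕ, a ^ n / (Nat.factorial n : ℂ) * g (n + (k + m)) := by
        simp only [hF_def]
        exact tsum_mul_left
      rw [heq, h0 (k + m), mul_zero]
    simp [this]
  have step3 : ∑' p : ℕ × ℕ, F p = ∑' j : ℕ, ∑ kl ∈ antidiagonal j, F kl := by
    rw [← Finset.HasAntidiagonal.sigmaAntidiagonalEquivProd.tsum_eq F]
    have hsig : Summable (fun x : Σ n : ℕ, antidiagonal n => F (Finset.HasAntidiagonal.sigmaAntidiagonalEquivProd x)) :=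
      Finset.HasAntidiagonal.sigmaAntidiagonalEquivProd.summable_iff.mpr hF
    exact (hsig.hasSum.sigma fun j => (antidiagonal j).hasSum F).tsum_eq.symm
  have step4 : ∀ j : ℕ, ∑ kl ∈ antidiagonal j, F kl = (0 : ℂ) ^ j / (Nat.factorial j : ℂ) * g (j + m) := by
    intro j
    rw [Finset.Nat.sum_antidiagonal_eq_sum_range_succ_mk,
      show ((0 : ℂ)) ^ j = (-a + a) ^ j by rw [neg_add_cancel], add_pow,
      Finset.sum_div, Finset.sum_mul]
    apply Finset.sum_congr rfl
    intro k hk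
    have hkj : k ≤ j := Nat.lt_succ_iff.mp (Finset.mem_range.mp hk)
    have hch : ((j.choose k : ℂ)) = (Nat.factorial j : ℂ) / ((Nat.factorial k : ℂ) * (Nat.factorial (j - k) : ℂ)) := by
      exact_mod_cast Nat.cast_choose ℂ hkj
    have hjk : (j - k) + (k + m) = j + m := by omega
    have hk0 : ((Nat.factorial k : ℂ)) ≠ 0 := Nat.cast_ne_zero.mpr (Nat.factorial_ne_zero k)
    have hjk0 : ((Nat.factorial (j - k) : ℂ)) ≠ 0 := Nat.cast_ne_zero.mpr (Nat.factorial_ne_zero _)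
    have hj0 : ((Nat.factorial j : ℂ)) ≠ 0 := Nat.cast_ne_zero.mpr (Nat.factorial_ne_zero j)
    show (-a) ^ k / (Nat.factorial k : ℂ) *
        (a ^ (j - k) / (Nat.factorial (j - k) : ℂ) * g ((j - k) + (k + m))) =
      (-a) ^ k * a ^ (j - k) * (j.choose k : ℂ) / (Nat.factorial j : ℂ) * g (j + m)
    rw [hjk, hch, mul_div_assoc, div_div,
      mul_comm ((Nat.factorial k : ℂ) * (Nat.factorial (j - k) : ℂ)) ((Nat.factorial j : ℂ)),
      ← div_div, div_self hj0]
    ring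
  have final : ∑' j : ℕ, (0 : ℂ) ^ j / (Nat.factorial j : ℂ) * g (j + m) = g m := by
    rw [tsum_eq_single 0]
    · simp
    · intro j hj
      simp [zero_pow hj]
  have := step2.symm.trans (step3.trans (tsum_congr step4))
  rw [final] at this
  exact this.symm

/-- The set of right-shifted copies of a sequence `a ∈ ℓ²(ℤ₊)`:
elements of ℓ² whose entries are those of `a` shifted `m` places to the right. -/
def shiftOrbit (a : lp (fun _ : ℕ => ℂ) 2) : Set (lp (fun _ : ℕ => ℂ) 2) :=
  {f | ∃ m : ℕ, ∀ n : ℕ, f n = if n < m then 0 else a (n - m)}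

/-- The sequence ωₙ = (conj(w₀)·Y)ⁿ/n! is a cyclic vector for the right shift on ℓ²(ℤ₊). -/
theorem stmt_8 (w₀ : ℂ) (Y : ℝ) (hY : 0 < Y)
    (ω : lp (fun _ : ℕ => ℂ) 2)
    (hω : ∀ n : ℕ, ω n = ((starRingEnd ℂ) w₀ * (Y : ℂ)) ^ n / (Nat.factorial n : ℂ)) :
    Dense ((Submodule.span ℂ (shiftOrbit ω) : Submodule ℂ (lp (fun _ : ℕ => ℂ) 2)) :
      Set (lp (fun _ : ℕ => ℂ) 2)) := by
  unfold shiftOrbit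
  rw [Submodule.dense_iff_topologicalClosure_eq_top,
    Submodule.topologicalClosure_eq_top_iff, Submodule.eq_bot_iff]
  intro g hg
  have hp : (0 : ℝ) < (2 : ℝ≥0∞).toReal := by norm_num
  -- shifted sequences are in ℓ²
  have hmem : ∀ m : ℕ,
      Memℓp (fun n : ℕ => if n < m then 0 else ω (n - m) : ∀ _ : ℕ, ℂ) 2 := by
    intro m
    apply memℓp_gen
    have hω2 := (memℓp_gen_iff hp).mp (lp.memℓp ω)
    refine ((add_left_injective m).summable_iff ?_).mp ?_
    · intro x hx
      have hxm : x < m := by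
        by_contra h
        exact hx ⟨x - m, show x - m + m = x by omega⟩
      simp [hxm, Real.zero_rpow (ne_of_gt hp)]
    · refine hω2.congr fun j => ?_
      simp [Nat.add_sub_cancel]
  have horth : ∀ m : ℕ, ∑' j : ℕ, (w₀ * (Y : ℂ)) ^ j / (Nat.factorial j : ℂ)
      * (g : ∀ _ : ℕ, ℂ) (j + m) = 0 := by
    intro m
    have hfm : (⟨_, hmem m⟩ : lp (fun _ : ℕ => ℂ) 2) ∈
        ({f | ∃ m : ℕ, ∀ n : ℕ, f n = if n < m then 0 else ω (n - m)} :
          Set (lp (fun _ : ℕ => ℂ) 2)) := ⟨m, fun n => rfl⟩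
    have h2 := (Submodule.mem_orthogonal _ g).mp hg _ (Submodule.subset_span hfm)
    rw [lp.inner_eq_tsum] at h2
    simp only [RCLike.inner_apply] at h2
    simp_rw [mul_comm ((g : ∀ _ : ℕ, ℂ) _)] at h2
    have hcoe : ∀ n : ℕ, ((⟨_, hmem m⟩ : lp (fun _ : ℕ => ℂ) 2) : ∀ _ : ℕ, ℂ) n
        = if n < m then 0 else ω (n - m) := fun n => rfl
    have hsupp : Function.support
        (fun n : ℕ => (starRingEnd ℂ) (if n < m then 0 else ω (n - m)) * (g : ∀ _ : ℕ, ℂ) n)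
        ⊆ Set.range (· + m) := by
      intro n hn
      by_contra hr
      have hnm : n < m := by
        by_contra h
        exact hr ⟨n - m, show n - m + m = n by omega⟩
      rw [Function.mem_support] at hn
      exact hn (by simp [hnm])
    have h3 := (add_left_injective m).tsum_eq hsupp
    rw [← h2, ← h3]
    apply tsum_congr
    intro j
    have hjm : ¬ (j + m < m) := by omega
    rw [if_neg hjm, Nat.add_sub_cancel, hω j, map_div₀, map_pow, map_mul]
    simp
  have hC : ∀ n : ℕ, ‖(g : ∀ _ : ℕ, ℂ) n‖ ≤ ‖g‖ :=
    fun n => lp.norm_apply_le_norm (by norm_num) g n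
  have hzero : ∀ m : ℕ, (g : ∀ _ : ℕ, ℂ) m = 0 :=
    key_aux (w₀ * (Y : ℂ)) _ ‖g‖ hC horth
  ext n
  exact hzero n
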